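/- Let f be a nonnegative càdlàg function on (0,T) with ∫_0^T f < 1, inf f > 0, sup f < ∞, and let f_n = f̃_n + 1/(nT) be approximations with f − 2/(nT) ≤ f̃_n ≤ f. Writing f_n in block form (1/(k_n n T)) ∑_{i=1}^{m_n} 1_{[u_i,v_i)} and d_n = (k_n n T / m_n)(1 − ∫_0^T f_n), one has, for all n large enough, (1 − ∫_0^T f)/(4 sup_{(0,T)} f) ≤ d_n ≤ 2/inf_{(0,T)} f. -/

import Mathlib

open MeasureTheory Filter Set Topology

set_option maxHeartbeats 1600000

theorem stmt17 {T : ℝ} (hT : 0 < T) (f : ℝ → ℝ)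
    (hf_int : IntegrableOn f (Set.Ioo 0 T))
    (hf_nonneg : ∀ t ∈ Set.Ioo 0 T, 0 ≤ f t)
    (hinf_pos : 0 < sInf (f '' Set.Ioo 0 T))
    (hbdd : BddAbove (f '' Set.Ioo 0 T))
    (hmass : ∫ t in Set.Ioo (0:ℝ) T, f t < 1)
    (fn : ℕ → ℝ → ℝ) (hfn_int : ∀ n, IntegrableOn (fn n) (Set.Ioo 0 T))
    -- sandwich: f − 2/(nT) ≤ f̃_n = f_n − 1/(nT) ≤ f
    (hsand : ∀ n : ℕ, 1 ≤ n → ∀ t ∈ Set.Ioo (0:ℝ) T,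
      f t - 2 / (n * T) ≤ fn n t - 1 / (n * T) ∧ fn n t - 1 / (n * T) ≤ f t)
    (kn mn Bn Ln Rn Cn : ℕ → ℕ)
    (hkn : ∀ n, 0 < kn n) (hmn : ∀ n, 0 < mn n)
    (hcount : ∀ n, mn n = Bn n + Ln n + Rn n + Cn n)
    -- block-count identities for inf and sup of f_n
    (hinf_fn : ∀ n : ℕ, 1 ≤ n →
      (Bn n : ℝ) / (kn n * n * T) = sInf (fn n '' Set.Ioo 0 T))
    (hsup_fn : ∀ n : ℕ, 1 ≤ n →
      ((Bn n : ℝ) + max (Ln n) (max (Rn n) (Cn n))) / (kn n * n * T) =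
        sSup (fn n '' Set.Ioo 0 T))
    (dn : ℕ → ℝ)
    (hdn : ∀ n, dn n = (kn n * n * T / mn n) * (1 - ∫ t in Set.Ioo (0:ℝ) T, fn n t)) :
    ∀ᶠ n in atTop,
      (1 - ∫ t in Set.Ioo (0:ℝ) T, f t) / (4 * sSup (f '' Set.Ioo 0 T)) ≤ dn n ∧
      dn n ≤ 2 / sInf (f '' Set.Ioo 0 T) := by
  have hTne : T ≠ 0 := ne_of_gt hT
  have hne : (Set.Ioo (0:ℝ) T).Nonempty := Set.nonempty_Ioo.2 hT
  have hne' : (f '' Set.Ioo 0 T).Nonempty := hne.image f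
  have hbb : BddBelow (f '' Set.Ioo 0 T) :=
    ⟨0, fun y hy => by obtain ⟨t, ht, rfl⟩ := hy; exact hf_nonneg t ht⟩
  have hm0S : sInf (f '' Set.Ioo 0 T) ≤ sSup (f '' Set.Ioo 0 T) := csInf_le_csSup hne' hbb hbdd
  set m0 := sInf (f '' Set.Ioo 0 T) with hm0def
  set S := sSup (f '' Set.Ioo 0 T) with hSdef
  have hSpos : 0 < S := lt_of_lt_of_le hinf_pos hm0S
  set I := ∫ t in Set.Ioo (0:ℝ) T, f t with hIdef
  have hI1 : I < 1 := hmass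
  have hμlt : volume (Set.Ioo (0:ℝ) T) < ⊤ := measure_Ioo_lt_top
  have hμT : (volume (Set.Ioo (0:ℝ) T)).toReal = T := by
    rw [Real.volume_Ioo]; simp [ENNReal.toReal_ofReal hT.le]
  have hinv : Tendsto (fun n : ℕ => 1 / ((n:ℝ) * T)) atTop (𝓝 0) := by
    have h1 : Tendsto (fun n : ℕ => ((n:ℝ) * T)) atTop atTop :=
      (tendsto_natCast_atTop_atTop).atTop_mul_const hT
    simp only [one_div]
    exact h1.inv_tendsto_atTop
  have hinvn : Tendsto (fun n : ℕ => 1 / (n:ℝ)) atTop (𝓝 0) :=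
    tendsto_one_div_atTop_nhds_zero_nat
  have h2e : ∀ᶠ n : ℕ in atTop, 1 / ((n:ℝ) * T) ≤ m0 / 2 :=
    hinv.eventually (eventually_le_nhds (by positivity))
  have h4e : ∀ᶠ n : ℕ in atTop, 1 / (n:ℝ) ≤ (1 - I) / 2 :=
    hinvn.eventually (eventually_le_nhds (by linarith))
  have h3e : ∀ᶠ n : ℕ in atTop,
      (1 - I) / (4 * S) ≤ (1 - I - 1 / (n:ℝ)) / (3 * S + 3 * (1 / ((n:ℝ) * T))) := by
    have hden : Tendsto (fun n : ℕ => 3 * S + 3 * (1 / ((n:ℝ) * T))) atTop (𝓝 (3 * S)) := by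
      have h1 := hinv.const_mul 3
      simpa using (tendsto_const_nhds (x := 3 * S) (f := atTop (α := ℕ))).add h1
    have hnum : Tendsto (fun n : ℕ => 1 - I - 1 / (n:ℝ)) atTop (𝓝 (1 - I)) := by
      simpa using (tendsto_const_nhds (x := 1 - I) (f := atTop (α := ℕ))).sub hinvn
    have hfrac : Tendsto (fun n : ℕ => (1 - I - 1 / (n:ℝ)) / (3 * S + 3 * (1 / ((n:ℝ) * T))))
        atTop (𝓝 ((1 - I) / (3 * S))) := hnum.div hden (by positivity)
    exact hfrac.eventually (eventually_ge_nhds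
      (div_lt_div_of_pos_left (by linarith) (by positivity) (by linarith)))
  filter_upwards [eventually_ge_atTop 1, h2e, h3e, h4e] with n hn1 h2 h3 h4
  have hn0 : (0:ℝ) < n := by exact_mod_cast hn1
  have hknpos : (0:ℝ) < kn n := by exact_mod_cast hkn n
  have hq : (0:ℝ) < (kn n : ℝ) * n * T := by positivity
  have h2d : (2:ℝ) / ((n:ℝ) * T) = 2 * (1 / ((n:ℝ) * T)) := by ring
  have hlo : ∀ t ∈ Set.Ioo (0:ℝ) T, f t - 1 / ((n:ℝ) * T) ≤ fn n t := fun t ht => by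
    have h := (hsand n hn1 t ht).1; rw [h2d] at h; linarith
  have hhi : ∀ t ∈ Set.Ioo (0:ℝ) T, fn n t ≤ f t + 1 / ((n:ℝ) * T) := fun t ht => by
    have h := (hsand n hn1 t ht).2; linarith
  have hconst : IntegrableOn (fun _ : ℝ => 1 / ((n:ℝ) * T)) (Set.Ioo 0 T) :=
    integrableOn_const hμlt.ne
  have hcT : T * (1 / ((n:ℝ) * T)) = 1 / n := by field_simp
  set Ifn := ∫ t in Set.Ioo (0:ℝ) T, fn n t with hIfndef
  have hIfn_le : Ifn ≤ I + 1 / (n:ℝ) := by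
    have h := setIntegral_mono_on (hfn_int n) (hf_int.add hconst) measurableSet_Ioo hhi
    simp only [Pi.add_apply] at h
    rw [integral_add hf_int hconst, setIntegral_const, smul_eq_mul, measureReal_def, hμT, hcT] at h
    exact h
  have hIfn_ge : I - 1 / (n:ℝ) ≤ Ifn := by
    have h := setIntegral_mono_on (hf_int.sub hconst) (hfn_int n) measurableSet_Ioo hlo
    simp only [Pi.sub_apply] at h
    rw [integral_sub hf_int hconst, setIntegral_const, smul_eq_mul, measureReal_def, hμT, hcT] at h
    exact h
  set A := sInf (fn n '' Set.Ioo 0 T) with hAdef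
  set Sf := sSup (fn n '' Set.Ioo 0 T) with hSfdef
  have hAge : m0 - 1 / ((n:ℝ) * T) ≤ A := by
    apply le_csInf (hne.image _)
    rintro y ⟨t, ht, rfl⟩
    have h1 := hlo t ht
    have h2' : m0 ≤ f t := csInf_le hbb ⟨t, ht, rfl⟩
    linarith
  have hSfle : Sf ≤ S + 1 / ((n:ℝ) * T) := by
    apply csSup_le (hne.image _)
    rintro y ⟨t, ht, rfl⟩
    have h1 := hhi t ht
    have h2' : f t ≤ S := le_csSup hbdd ⟨t, ht, rfl⟩
    linarith
  have hApos : 0 < A := by linarith [hinf_pos]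
  have hBn : (Bn n : ℝ) = A * ((kn n : ℝ) * n * T) := by
    have h := hinf_fn n hn1
    field_simp at h
    linarith
  have hBM : (Bn n : ℝ) + (max (Ln n) (max (Rn n) (Cn n)) : ℕ) =
      Sf * ((kn n : ℝ) * n * T) := by
    have h := hsup_fn n hn1
    rw [div_eq_iff (ne_of_gt hq)] at h
    exact_mod_cast h
  have hmncast : (mn n : ℝ) = (Bn n : ℝ) + Ln n + Rn n + Cn n := by
    have := hcount n; exact_mod_cast congrArg (Nat.cast : ℕ → ℝ) this
  have hLM : (Ln n : ℝ) ≤ (max (Ln n) (max (Rn n) (Cn n)) : ℕ) := by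
    exact_mod_cast le_max_left _ _
  have hRM : (Rn n : ℝ) ≤ (max (Ln n) (max (Rn n) (Cn n)) : ℕ) := by
    exact_mod_cast le_trans (le_max_left _ _) (le_max_right _ _)
  have hCM : (Cn n : ℝ) ≤ (max (Ln n) (max (Rn n) (Cn n)) : ℕ) := by
    exact_mod_cast le_trans (le_max_right _ _) (le_max_right _ _)
  have hmnpos : (0:ℝ) < mn n := by exact_mod_cast hmn n
  have hmnle3 : (mn n : ℝ) ≤ 3 * Sf * ((kn n : ℝ) * n * T) - 2 * A * ((kn n : ℝ) * n * T) := by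
    linarith [hBn, hBM, hmncast, hLM, hRM, hCM]
  have hD : (mn n : ℝ) ≤ (3 * S + 3 * (1 / ((n:ℝ) * T))) * ((kn n : ℝ) * n * T) := by
    linarith [hmnle3, mul_le_mul_of_nonneg_right hSfle hq.le, mul_nonneg hApos.le hq.le]
  have hdnval : dn n = ((kn n : ℝ) * n * T) * (1 - Ifn) / (mn n) := by
    rw [hdn n]; ring
  have hIfn_nonneg : 0 ≤ Ifn := by
    apply setIntegral_nonneg measurableSet_Ioo
    intro t ht
    have h1 := hlo t ht
    have h2' : m0 ≤ f t := csInf_le hbb ⟨t, ht, rfl⟩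
    linarith
  constructor
  · have key1 : (1 - I - 1 / (n:ℝ)) / (3 * S + 3 * (1 / ((n:ℝ) * T))) ≤ dn n := by
      rw [hdnval, div_le_div_iff₀ (by positivity) hmnpos]
      have h1 : 1 - I - 1 / (n:ℝ) ≤ 1 - Ifn := by linarith
      have h0 : (0:ℝ) ≤ 1 - I - 1 / (n:ℝ) := by linarith
      nlinarith [mul_le_mul_of_nonneg_left hD h0,
        mul_le_mul_of_nonneg_right h1
          (mul_nonneg (by positivity : (0:ℝ) ≤ 3 * S + 3 * (1 / ((n:ℝ) * T))) hq.le)]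
    exact le_trans h3 key1
  · rw [hdnval, div_le_div_iff₀ hmnpos hinf_pos]
    have hBle : (Bn n : ℝ) ≤ mn n := by
      rw [hmncast]
      have l1 : (0:ℝ) ≤ Ln n := Nat.cast_nonneg _
      have l2 : (0:ℝ) ≤ Rn n := Nat.cast_nonneg _
      have l3 : (0:ℝ) ≤ Cn n := Nat.cast_nonneg _
      linarith
    have hA2 : m0 / 2 ≤ A := by linarith
    nlinarith [mul_le_mul_of_nonneg_right hA2 hq.le, mul_nonneg hinf_pos.le hq.le,
      mul_le_mul_of_nonneg_right (sub_le_self 1 hIfn_nonneg)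
        (mul_nonneg hinf_pos.le hq.le)]
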